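/- If X, Y are independent G-valued random variables and (X_0,Y_0),…,(X_n,Y_n) are independent copies of (X,Y), with S_i := X_i + Y_i, then H(S_0 + S_1 + … + S_n) ≤ (2n+1)·H(X+Y) − n·H(X) − n·H(Y). -/

import Mathlib

open Real
open scoped BigOperators Pointwise Classical

/-- A finitely supported probability space. -/
structure FinProb (Ω : Type*) [Fintype Ω] where
  p : Ω → ℝ
  nonneg : ∀ ω, 0 ≤ p ω
  sum_one : ∑ ω, p ω = 1

/-- Probability that the random variable `X` takes the value `s`. -/
noncomputable def prob {Ω S : Type*} [Fintype Ω] (μ : FinProb Ω) (X : Ω → S) (s : S) : ℝ :=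
  ∑ ω, if X ω = s then μ.p ω else 0

/-- Shannon entropy of a discrete random variable. -/
noncomputable def entropy {Ω S : Type*} [Fintype Ω] (μ : FinProb Ω) (X : Ω → S) : ℝ :=
  ∑ s ∈ Finset.univ.image X, Real.negMulLog (prob μ X s)

/-- Conditional Shannon entropy `H(X|Y) = H(X,Y) - H(Y)`. -/
noncomputable def condEntropy {Ω S T : Type*} [Fintype Ω] (μ : FinProb Ω)
    (X : Ω → S) (Y : Ω → T) : ℝ :=
  entropy μ (fun ω => (X ω, Y ω)) - entropy μ Y

/-- The essential range of a random variable: values attained with positive probability. -/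
noncomputable def rangeF {Ω S : Type*} [Fintype Ω] (μ : FinProb Ω) (X : Ω → S) : Finset S :=
  (Finset.univ.image X).filter (fun s => prob μ X s ≠ 0)

/-- Two random variables (on possibly different spaces) have the same distribution. -/
def IdentDist {Ω Ω' S : Type*} [Fintype Ω] [Fintype Ω'] (μ : FinProb Ω) (X : Ω → S)
    (μ' : FinProb Ω') (Y : Ω' → S) : Prop :=
  ∀ s, prob μ X s = prob μ' Y s

/-- Independence of two random variables. -/
def IndepRV {Ω S T : Type*} [Fintype Ω] (μ : FinProb Ω) (X : Ω → S) (Y : Ω → T) : Prop :=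
  ∀ s t, prob μ (fun ω => (X ω, Y ω)) (s, t) = prob μ X s * prob μ Y t

/-- Joint independence of a finite family of random variables. -/
def IndepFam {Ω ι : Type*} [Fintype Ω] [Fintype ι] {S : ι → Type*}
    (μ : FinProb Ω) (X : ∀ i, Ω → S i) : Prop :=
  ∀ f : ∀ i, S i, prob μ (fun ω i => X i ω) f = ∏ i, prob μ (X i) (f i)

/-- `X` and `Y` are conditionally independent given `W`. -/
def CondIndepGiven {Ω S T U : Type*} [Fintype Ω] (μ : FinProb Ω)
    (X : Ω → S) (Y : Ω → T) (W : Ω → U) : Prop :=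
  ∀ s t u, prob μ (fun ω => (X ω, Y ω, W ω)) (s, t, u) * prob μ W u
    = prob μ (fun ω => (X ω, W ω)) (s, u) * prob μ (fun ω => (Y ω, W ω)) (t, u)

/-- `Y` is determined by `X` (almost surely). -/
def Determines {Ω S T : Type*} [Fintype Ω] (μ : FinProb Ω) (X : Ω → S) (Y : Ω → T) : Prop :=
  ∃ f : S → T, ∀ ω, μ.p ω ≠ 0 → Y ω = f (X ω)

/-- The entropy transport distance between the distributions of `X` and `Y`:
the infimum of `H(Z)` over random variables `Z` (coupled with a copy `X'` of `X`)
such that `X' + Z` is distributed as `Y`. -/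
noncomputable def transDist {Ω₁ Ω₂ G : Type*} [Fintype Ω₁] [Fintype Ω₂] [AddCommGroup G]
    (μ : FinProb Ω₁) (X : Ω₁ → G) (ν : FinProb Ω₂) (Y : Ω₂ → G) : ℝ :=
  sInf {h : ℝ | ∃ (n : ℕ) (μ' : FinProb (Fin n)) (X' Z : Fin n → G),
    IdentDist μ' X' μ X ∧ IdentDist μ' (fun ω => X' ω + Z ω) ν Y ∧ entropy μ' Z = h}

/-- Conditioning a finitely supported probability space on an event `E`
(returning `μ` unchanged if `E` has zero probability). -/
noncomputable def condFinProb {Ω : Type*} [Fintype Ω] (μ : FinProb Ω) (E : Ω → Prop) :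
    FinProb Ω :=
  if h : 0 < ∑ ω, if E ω then μ.p ω else 0 then
    { p := fun ω => if E ω then μ.p ω / (∑ ω', if E ω' then μ.p ω' else 0) else 0
      nonneg := fun ω => by
        split
        · exact div_nonneg (μ.nonneg ω) h.le
        · exact le_refl 0
      sum_one := by
        have h' : ∀ ω, (if E ω then μ.p ω / (∑ ω', if E ω' then μ.p ω' else 0) else 0)
            = (if E ω then μ.p ω else 0) / (∑ ω', if E ω' then μ.p ω' else 0) := by
          intro ω; split <;> simp
        rw [Finset.sum_congr rfl (fun ω _ => h' ω), ← Finset.sum_div, div_self h.ne'] }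
  else μ

section Core
variable {ι : Type*}

lemma negMulLog_add_le {a b : ℝ} (ha : 0 ≤ a) (hb : 0 ≤ b) :
    Real.negMulLog (a + b) ≤ Real.negMulLog a + Real.negMulLog b := by
  rcases ha.eq_or_lt with h | h
  · simp [← h]
  rcases hb.eq_or_lt with h' | h'
  · simp [← h']
  have h1 : Real.log a ≤ Real.log (a + b) := Real.log_le_log h (by linarith)
  have h2 : Real.log b ≤ Real.log (a + b) := Real.log_le_log h' (by linarith)
  simp only [Real.negMulLog, neg_mul]
  nlinarith

lemma negMulLog_sum_le (A : Finset ι) (f : ι → ℝ) (hf : ∀ i ∈ A, 0 ≤ f i) :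
    Real.negMulLog (∑ i ∈ A, f i) ≤ ∑ i ∈ A, Real.negMulLog (f i) := by
  induction A using Finset.cons_induction with
  | empty => simp
  | cons a A ha ih =>
    rw [Finset.sum_cons, Finset.sum_cons]
    calc Real.negMulLog (f a + ∑ i ∈ A, f i)
        ≤ Real.negMulLog (f a) + Real.negMulLog (∑ i ∈ A, f i) :=
          negMulLog_add_le (hf a (Finset.mem_cons_self a A))
            (Finset.sum_nonneg fun i hi => hf i (Finset.mem_cons_of_mem hi))
      _ ≤ _ := by
          have := ih fun i hi => hf i (Finset.mem_cons_of_mem hi)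
          linarith

lemma gibbs (I : Finset ι) (a b : ι → ℝ) (ha : ∀ i ∈ I, 0 ≤ a i) (hb : ∀ i ∈ I, 0 ≤ b i)
    (hab : ∀ i ∈ I, a i ≠ 0 → b i ≠ 0) (ha1 : ∑ i ∈ I, a i = 1) (hb1 : ∑ i ∈ I, b i ≤ 1) :
    ∑ i ∈ I, Real.negMulLog (a i) ≤ ∑ i ∈ I, -(a i * Real.log (b i)) := by
  have key : ∀ i ∈ I, Real.negMulLog (a i) ≤ -(a i * Real.log (b i)) + (b i - a i) := by
    intro i hi
    rcases (ha i hi).eq_or_lt with h | h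
    · simp only [Real.negMulLog, ← h]
      simpa using hb i hi
    · have hbpos : 0 < b i := (hb i hi).lt_of_ne (Ne.symm (hab i hi h.ne'))
      have hlog := Real.log_le_sub_one_of_pos (div_pos hbpos h)
      rw [Real.log_div (ne_of_gt hbpos) (ne_of_gt h)] at hlog
      have h2 : a i * (Real.log (b i) - Real.log (a i)) ≤ a i * (b i / a i - 1) :=
        mul_le_mul_of_nonneg_left hlog h.le
      have h3 : a i * (b i / a i) = b i := mul_div_cancel₀ _ (ne_of_gt h)
      simp only [Real.negMulLog, neg_mul]
      nlinarith
  calc ∑ i ∈ I, Real.negMulLog (a i)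
      ≤ ∑ i ∈ I, (-(a i * Real.log (b i)) + (b i - a i)) := Finset.sum_le_sum key
    _ = ∑ i ∈ I, -(a i * Real.log (b i)) + ((∑ i ∈ I, b i) - ∑ i ∈ I, a i) := by
        rw [Finset.sum_add_distrib, Finset.sum_sub_distrib]
    _ ≤ ∑ i ∈ I, -(a i * Real.log (b i)) := by rw [ha1]; linarith

end Core

section Helper
variable {Ω Ω' S T : Type*} [Fintype Ω] [Fintype Ω']

lemma prob_nonneg (μ : FinProb Ω) (X : Ω → S) (s : S) : 0 ≤ prob μ X s :=
  Finset.sum_nonneg fun ω _ => by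
    by_cases h : X ω = s <;> simp [h, μ.nonneg ω]

lemma mem_image_self (X : Ω → S) (ω : Ω) : X ω ∈ Finset.univ.image X :=
  Finset.mem_image_of_mem _ (Finset.mem_univ ω)

lemma prob_eq_zero_of_not_mem {μ : FinProb Ω} {X : Ω → S} {s : S}
    (h : s ∉ Finset.univ.image X) : prob μ X s = 0 := by
  apply Finset.sum_eq_zero; intro ω _
  rw [if_neg]; intro he; exact h (he ▸ mem_image_self X ω)

lemma sum_prob (μ : FinProb Ω) (X : Ω → S) {F : Finset S}
    (hF : ∀ ω, X ω ∈ F) : ∑ s ∈ F, prob μ X s = 1 := by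
  unfold prob
  rw [Finset.sum_comm, ← μ.sum_one]
  refine Finset.sum_congr rfl fun ω _ => ?_
  rw [Finset.sum_ite_eq, if_pos (hF ω)]

lemma entropy_eq_sum (μ : FinProb Ω) (X : Ω → S) {F : Finset S}
    (hF : ∀ ω, X ω ∈ F) :
    entropy μ X = ∑ s ∈ F, Real.negMulLog (prob μ X s) :=
  Finset.sum_subset
    (fun s hs => by
      rw [Finset.mem_image] at hs
      obtain ⟨ω, -, rfl⟩ := hs
      exact hF ω)
    fun s _ hs => by
    rw [prob_eq_zero_of_not_mem hs, Real.negMulLog_zero]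

lemma prob_comp (μ : FinProb Ω) (X : Ω → S) (f : S → T) {F : Finset S}
    (hF : ∀ ω, X ω ∈ F) (t : T) :
    prob μ (fun ω => f (X ω)) t = ∑ s ∈ F, if f s = t then prob μ X s else 0 := by
  unfold prob
  have key : ∀ s ∈ F, (if f s = t then ∑ ω, if X ω = s then μ.p ω else 0 else 0)
      = ∑ ω, if X ω = s then (if f (X ω) = t then μ.p ω else 0) else 0 := by
    intro s _
    split_ifs with h
    · refine Finset.sum_congr rfl fun ω _ => ?_
      by_cases h2 : X ω = s
      · rw [if_pos h2, if_pos h2, if_pos (h2 ▸ h)]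
      · rw [if_neg h2, if_neg h2]
    · symm; apply Finset.sum_eq_zero; intro ω _
      by_cases h2 : X ω = s
      · rw [if_pos h2, if_neg (h2 ▸ h)]
      · rw [if_neg h2]
  rw [Finset.sum_congr rfl key, Finset.sum_comm]
  refine Finset.sum_congr rfl fun ω _ => ?_
  simp only
  rw [Finset.sum_ite_eq, if_pos (hF ω)]

lemma prob_fst (μ : FinProb Ω) (A : Ω → S) (B : Ω → T) {G' : Finset T}
    (hG : ∀ ω, B ω ∈ G') (s : S) :
    prob μ A s = ∑ t ∈ G', prob μ (fun ω => (A ω, B ω)) (s, t) := by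
  unfold prob
  rw [Finset.sum_comm]
  refine Finset.sum_congr rfl fun ω _ => ?_
  simp only [Prod.mk.injEq]
  by_cases h : A ω = s
  · simp only [h, true_and]
    rw [if_pos trivial, Finset.sum_ite_eq, if_pos (hG ω)]
  · simp [h]

lemma prob_snd (μ : FinProb Ω) (A : Ω → S) (B : Ω → T) {F : Finset S}
    (hF : ∀ ω, A ω ∈ F) (t : T) :
    prob μ B t = ∑ s ∈ F, prob μ (fun ω => (A ω, B ω)) (s, t) := by
  unfold prob
  rw [Finset.sum_comm]
  refine Finset.sum_congr rfl fun ω _ => ?_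
  simp only [Prod.mk.injEq]
  by_cases h : B ω = t
  · simp only [h, and_true]
    rw [if_pos trivial, Finset.sum_ite_eq, if_pos (hF ω)]
  · simp [h]

end Helper

section Entropy
variable {Ω Ω' S T : Type*} [Fintype Ω] [Fintype Ω']

lemma entropy_comp_le (μ : FinProb Ω) (X : Ω → S) (f : S → T) :
    entropy μ (fun ω => f (X ω)) ≤ entropy μ X := by
  classical
  have himg : Finset.univ.image (fun ω => f (X ω)) = (Finset.univ.image X).image f := by
    rw [Finset.image_image]; rfl
  unfold entropy
  rw [himg]
  have hfib := Finset.sum_fiberwise_of_maps_to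
    (fun s (hs : s ∈ Finset.univ.image X) => Finset.mem_image_of_mem f hs)
    (fun s => Real.negMulLog (prob μ X s))
  rw [← hfib]
  refine Finset.sum_le_sum fun t ht => ?_
  have hpc : prob μ (fun ω => f (X ω)) t
      = ∑ s ∈ (Finset.univ.image X).filter (fun s => f s = t), prob μ X s := by
    rw [prob_comp μ X f (fun ω => mem_image_self X ω) t, Finset.sum_filter]
  rw [hpc]
  exact negMulLog_sum_le _ _ fun s _ => prob_nonneg μ X s

lemma image_pair_subset [DecidableEq S] [DecidableEq T] [DecidableEq (S × T)]
    (A : Ω → S) (B : Ω → T) :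
    Finset.univ.image (fun ω => (A ω, B ω)) ⊆
      (Finset.univ.image A) ×ˢ (Finset.univ.image B) := by
  intro x hx
  obtain ⟨ω, -, rfl⟩ := Finset.mem_image.1 hx
  exact Finset.mem_product.2 ⟨Finset.mem_image_of_mem _ (Finset.mem_univ ω),
    Finset.mem_image_of_mem _ (Finset.mem_univ ω)⟩

lemma entropy_pair_le (μ : FinProb Ω) (A : Ω → S) (B : Ω → T) :
    entropy μ (fun ω => (A ω, B ω)) ≤ entropy μ A + entropy μ B := by
  set F := Finset.univ.image A with hF
  set G' := Finset.univ.image B with hG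
  have hKmem : ∀ ω, (A ω, B ω) ∈ F ×ˢ G' :=
    fun ω => Finset.mem_product.2 ⟨Finset.mem_image_of_mem _ (Finset.mem_univ ω),
      Finset.mem_image_of_mem _ (Finset.mem_univ ω)⟩
  set P : S × T → ℝ := prob μ (fun ω => (A ω, B ω)) with hP
  have hmargA : ∀ s, prob μ A s = ∑ t ∈ G', P (s, t) := fun s =>
    prob_fst μ A B (fun ω => mem_image_self B ω) s
  have hmargB : ∀ t, prob μ B t = ∑ s ∈ F, P (s, t) := fun t =>
    prob_snd μ A B (fun ω => mem_image_self A ω) t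
  have hnz : ∀ st ∈ F ×ˢ G', P st ≠ 0 → prob μ A st.1 ≠ 0 ∧ prob μ B st.2 ≠ 0 := by
    rintro ⟨s, t⟩ hst hPst
    obtain ⟨h1, h2⟩ := Finset.mem_product.1 hst
    have hpos : 0 < P (s, t) := (prob_nonneg μ _ (s, t)).lt_of_ne (Ne.symm hPst)
    constructor
    · rw [hmargA]
      have hle : P (s, t) ≤ ∑ t' ∈ G', P (s, t') :=
        Finset.single_le_sum (f := fun t' => P (s, t')) (fun t' _ => prob_nonneg μ _ _) h2
      exact ne_of_gt (lt_of_lt_of_le hpos hle)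
    · rw [hmargB]
      have hle : P (s, t) ≤ ∑ s' ∈ F, P (s', t) :=
        Finset.single_le_sum (f := fun s' => P (s', t)) (fun s' _ => prob_nonneg μ _ _) h1
      exact ne_of_gt (lt_of_lt_of_le hpos hle)
  have step1 : entropy μ (fun ω => (A ω, B ω))
      ≤ ∑ st ∈ F ×ˢ G', -(P st * Real.log (prob μ A st.1 * prob μ B st.2)) := by
    rw [entropy_eq_sum μ _ hKmem]
    refine gibbs _ _ _ (fun st _ => prob_nonneg μ _ st)
      (fun st _ => mul_nonneg (prob_nonneg μ _ _) (prob_nonneg μ _ _))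
      (fun st hst hne => mul_ne_zero (hnz st hst hne).1 (hnz st hst hne).2)
      (sum_prob μ _ hKmem) ?_
    rw [Finset.sum_product]
    dsimp only
    have : ∀ s ∈ F, ∑ t ∈ G', prob μ A s * prob μ B t = prob μ A s := by
      intro s _; rw [← Finset.mul_sum, sum_prob μ B (fun ω => mem_image_self B ω), mul_one]
    rw [Finset.sum_congr rfl this, sum_prob μ A (fun ω => mem_image_self A ω)]
  have step2 : ∑ st ∈ F ×ˢ G', -(P st * Real.log (prob μ A st.1 * prob μ B st.2))
      = ∑ st ∈ F ×ˢ G', (-(P st * Real.log (prob μ A st.1))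
          + -(P st * Real.log (prob μ B st.2))) := by
    refine Finset.sum_congr rfl fun st hst => ?_
    by_cases h : P st = 0
    · simp [h]
    · rw [Real.log_mul (hnz st hst h).1 (hnz st hst h).2]; ring
  have step3 : ∑ st ∈ F ×ˢ G', -(P st * Real.log (prob μ A st.1)) = entropy μ A := by
    rw [Finset.sum_product]
    dsimp only
    refine Finset.sum_congr rfl fun s _ => ?_
    rw [Finset.sum_neg_distrib, ← Finset.sum_mul, ← hmargA]
    simp [Real.negMulLog]
  have step4 : ∑ st ∈ F ×ˢ G', -(P st * Real.log (prob μ B st.2)) = entropy μ B := by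
    rw [Finset.sum_product_right]
    dsimp only
    refine Finset.sum_congr rfl fun t _ => ?_
    rw [Finset.sum_neg_distrib, ← Finset.sum_mul, ← hmargB]
    simp [Real.negMulLog]
  calc entropy μ (fun ω => (A ω, B ω)) ≤ _ := step1
    _ = _ := step2
    _ = entropy μ A + entropy μ B := by
        rw [Finset.sum_add_distrib, step3, step4]

end Entropy

section Chunk2
variable {Ω Ω' S T U : Type*} [Fintype Ω] [Fintype Ω']

lemma entropy_pair_of_indep (μ : FinProb Ω) (A : Ω → S) (B : Ω → T)
    (h : IndepRV μ A B) :
    entropy μ (fun ω => (A ω, B ω)) = entropy μ A + entropy μ B := by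
  set F := Finset.univ.image A with hF
  set G' := Finset.univ.image B with hG
  have hKmem : ∀ ω, (A ω, B ω) ∈ F ×ˢ G' :=
    fun ω => Finset.mem_product.2 ⟨Finset.mem_image_of_mem _ (Finset.mem_univ ω),
      Finset.mem_image_of_mem _ (Finset.mem_univ ω)⟩
  have hEA : entropy μ A = ∑ s ∈ F, Real.negMulLog (prob μ A s) :=
    entropy_eq_sum μ A (fun ω => mem_image_self A ω)
  have hEB : entropy μ B = ∑ t ∈ G', Real.negMulLog (prob μ B t) :=
    entropy_eq_sum μ B (fun ω => mem_image_self B ω)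
  rw [entropy_eq_sum μ _ hKmem]
  have hcongr : ∀ st ∈ F ×ˢ G',
      Real.negMulLog (prob μ (fun ω => (A ω, B ω)) st)
        = Real.negMulLog (prob μ A st.1 * prob μ B st.2) := by
    rintro ⟨s, t⟩ -
    rw [h s t]
  rw [Finset.sum_congr rfl hcongr, Finset.sum_product]
  dsimp only
  have hinner : ∀ s ∈ F, ∑ t ∈ G', Real.negMulLog (prob μ A s * prob μ B t)
      = Real.negMulLog (prob μ A s) + prob μ A s * entropy μ B := by
    intro s _
    simp only [Real.negMulLog_mul]
    rw [Finset.sum_add_distrib, ← Finset.sum_mul, ← Finset.mul_sum,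
      sum_prob μ B (fun ω => mem_image_self B ω), one_mul, hEB]
  rw [Finset.sum_congr rfl hinner, Finset.sum_add_distrib, ← Finset.sum_mul,
    sum_prob μ A (fun ω => mem_image_self A ω), one_mul, hEA]

lemma entropy_comp_of_injective (μ : FinProb Ω) (X : Ω → S) (f : S → T)
    (hf : Function.Injective f) :
    entropy μ (fun ω => f (X ω)) = entropy μ X := by
  have hp : ∀ s, prob μ (fun ω => f (X ω)) (f s) = prob μ X s := by
    intro s
    refine Finset.sum_congr rfl fun ω _ => ?_
    simp [hf.eq_iff]
  have himg : Finset.univ.image (fun ω => f (X ω)) = (Finset.univ.image X).image f := by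
    rw [Finset.image_image]; rfl
  unfold entropy
  rw [himg, Finset.sum_image (fun a _ b _ hab => hf hab)]
  exact Finset.sum_congr rfl fun s _ => by rw [hp s]

lemma entropy_congr {μ : FinProb Ω} {ν : FinProb Ω'} {X : Ω → S} {Y : Ω' → S}
    (h : IdentDist μ X ν Y) : entropy μ X = entropy ν Y := by
  rw [entropy_eq_sum μ X (F := Finset.univ.image X ∪ Finset.univ.image Y)
      (fun ω => Finset.mem_union_left _ (mem_image_self X ω)),
    entropy_eq_sum ν Y (fun ω => Finset.mem_union_right _ (mem_image_self Y ω))]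
  exact Finset.sum_congr rfl fun s _ => by rw [h s]

lemma identDist_comp {μ : FinProb Ω} {ν : FinProb Ω'} {X : Ω → S} {Y : Ω' → S}
    (h : IdentDist μ X ν Y) (f : S → T) :
    IdentDist μ (fun ω => f (X ω)) ν (fun ω => f (Y ω)) := by
  intro t
  rw [prob_comp μ X f (F := Finset.univ.image X ∪ Finset.univ.image Y)
      (fun ω => Finset.mem_union_left _ (mem_image_self X ω)) t,
    prob_comp ν Y f (fun ω => Finset.mem_union_right _ (mem_image_self Y ω)) t]
  exact Finset.sum_congr rfl fun s _ => by rw [h s]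

lemma prob_pair_swap (μ : FinProb Ω) (A : Ω → S) (B : Ω → T) (a : S) (b : T) :
    prob μ (fun ω => (B ω, A ω)) (b, a) = prob μ (fun ω => (A ω, B ω)) (a, b) := by
  refine Finset.sum_congr rfl fun ω _ => ?_
  simp [Prod.ext_iff, and_comm]

lemma IndepRV.symm {μ : FinProb Ω} {A : Ω → S} {B : Ω → T} (h : IndepRV μ A B) :
    IndepRV μ B A := by
  intro b a
  rw [prob_pair_swap, h a b, mul_comm]

lemma prob_assoc (μ : FinProb Ω) (A : Ω → S) (B : Ω → T) (C : Ω → U)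
    (a : S) (b : T) (c : U) :
    prob μ (fun ω => ((A ω, B ω), C ω)) ((a, b), c)
      = prob μ (fun ω => (A ω, (B ω, C ω))) (a, (b, c)) := by
  refine Finset.sum_congr rfl fun ω _ => ?_
  simp [Prod.ext_iff, and_assoc]

lemma indep_comp₂ {S' T' : Type*} {μ : FinProb Ω} {A : Ω → S} {B : Ω → T}
    (h : IndepRV μ A B) (f : S → S') (g : T → T') :
    IndepRV μ (fun ω => f (A ω)) (fun ω => g (B ω)) := by
  intro s t
  refine (prob_comp μ (fun ω => (A ω, B ω)) (fun p => (f p.1, g p.2))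
    (fun ω => Finset.mem_product.2 ⟨mem_image_self A ω, mem_image_self B ω⟩) (s, t)).trans ?_
  rw [Finset.sum_product]
  simp only [Prod.mk.injEq, ite_and, h]
  rw [prob_comp μ A f (fun ω => mem_image_self A ω) s,
    prob_comp μ B g (fun ω => mem_image_self B ω) t, Finset.sum_mul_sum]
  refine Finset.sum_congr rfl fun u _ => Finset.sum_congr rfl fun w _ => ?_
  by_cases hu : f u = s <;> by_cases hw : g w = t <;> simp [hu, hw, h u w]

end Chunk2
section Chunk3
variable {Ω Ω' S T U : Type*} [Fintype Ω] [Fintype Ω']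

lemma indep_snd_of_pair {μ : FinProb Ω} {A : Ω → S} {B : Ω → T} {C : Ω → U}
    (h : IndepRV μ (fun ω => (A ω, B ω)) C) : IndepRV μ B C := by
  intro b c
  have h1 : prob μ (fun ω => (B ω, C ω)) (b, c)
      = ∑ a ∈ Finset.univ.image A, prob μ (fun ω => (A ω, (B ω, C ω))) (a, (b, c)) :=
    prob_snd μ A (fun ω => (B ω, C ω)) (fun ω => mem_image_self A ω) (b, c)
  have h2 : ∀ a ∈ Finset.univ.image A,
      prob μ (fun ω => (A ω, (B ω, C ω))) (a, (b, c))
        = prob μ (fun ω => (A ω, B ω)) (a, b) * prob μ C c := by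
    intro a _
    rw [← prob_assoc μ A B C a b c, h (a, b) c]
  have h3 : prob μ B b = ∑ a ∈ Finset.univ.image A, prob μ (fun ω => (A ω, B ω)) (a, b) :=
    prob_snd μ A B (fun ω => mem_image_self A ω) b
  rw [h1, Finset.sum_congr rfl h2, ← Finset.sum_mul, ← h3]

lemma indep_triple_pair {μ : FinProb Ω} {A : Ω → S} {B : Ω → T} {C : Ω → U}
    (h1 : IndepRV μ (fun ω => (A ω, B ω)) C) (h2 : IndepRV μ A B) :
    IndepRV μ A (fun ω => (B ω, C ω)) := by
  rintro a ⟨b, c⟩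
  rw [← prob_assoc μ A B C a b c, h1 (a, b) c, h2 a b, indep_snd_of_pair h1 b c]
  ring

lemma indep_pair_left {μ : FinProb Ω} {A : Ω → S} {B : Ω → T} {C : Ω → U}
    (hM : IndepRV μ A (fun ω => (B ω, C ω))) (hN : IndepRV μ B C) :
    IndepRV μ (fun ω => (A ω, B ω)) C := by
  have hAB : IndepRV μ A B := indep_comp₂ hM id Prod.fst
  rintro ⟨a, b⟩ c
  rw [prob_assoc μ A B C a b c, hM a (b, c), hN b c, hAB a b]
  ring

lemma indep_of_identdist {μ : FinProb Ω} {ν : FinProb Ω'} {A : Ω → S} {B : Ω → T}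
    {A' : Ω' → S} {B' : Ω' → T}
    (h : IdentDist μ (fun ω => (A ω, B ω)) ν (fun ω => (A' ω, B' ω)))
    (h' : IndepRV ν A' B') : IndepRV μ A B := by
  intro a b
  have hA : prob μ A a = prob ν A' a := identDist_comp h Prod.fst a
  have hB : prob μ B b = prob ν B' b := identDist_comp h Prod.snd b
  rw [h (a, b), h' a b, hA, hB]

lemma identdist_add_of_indep {G : Type*} [AddCommGroup G] {μ : FinProb Ω} {ν : FinProb Ω'}
    {A : Ω → G} {B : Ω → G} {A' : Ω' → G} {B' : Ω' → G}
    (hi : IndepRV μ A B) (hi' : IndepRV ν A' B')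
    (hA : IdentDist μ A ν A') (hB : IdentDist μ B ν B') :
    IdentDist μ (fun ω => A ω + B ω) ν (fun ω => A' ω + B' ω) := by
  intro s
  have e1 : prob μ (fun ω => A ω + B ω) s
      = ∑ x ∈ (Finset.univ.image A ∪ Finset.univ.image A')
            ×ˢ (Finset.univ.image B ∪ Finset.univ.image B'),
          if x.1 + x.2 = s then prob μ (fun ω => (A ω, B ω)) x else 0 :=
    prob_comp μ (fun ω => (A ω, B ω)) (fun p => p.1 + p.2)
      (fun ω => Finset.mem_product.2
        ⟨Finset.mem_union_left _ (mem_image_self A ω),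
         Finset.mem_union_left _ (mem_image_self B ω)⟩) s
  have e2 : prob ν (fun ω => A' ω + B' ω) s
      = ∑ x ∈ (Finset.univ.image A ∪ Finset.univ.image A')
            ×ˢ (Finset.univ.image B ∪ Finset.univ.image B'),
          if x.1 + x.2 = s then prob ν (fun ω => (A' ω, B' ω)) x else 0 :=
    prob_comp ν (fun ω => (A' ω, B' ω)) (fun p => p.1 + p.2)
      (fun ω => Finset.mem_product.2
        ⟨Finset.mem_union_right _ (mem_image_self A' ω),
         Finset.mem_union_right _ (mem_image_self B' ω)⟩) s
  rw [e1, e2]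
  refine Finset.sum_congr rfl ?_
  rintro ⟨u, w⟩ -
  rw [hi u w, hi' u w, hA u, hB w]

end Chunk3
section Chunk4
variable {Ω : Type*} [Fintype Ω]

lemma tuple_cons_prob {m : ℕ} {S : Type*} (μ : FinProb Ω) (V : Fin (m+1) → Ω → S)
    (x : S) (g : Fin m → S) :
    prob μ (fun ω => (V 0 ω, fun i : Fin m => V i.succ ω)) (x, g)
      = prob μ (fun ω i => V i ω) (Fin.cons x g) := by
  refine Finset.sum_congr rfl fun ω _ => ?_
  have hiff : ((V 0 ω, fun i : Fin m => V i.succ ω) = (x, g))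
      ↔ ((fun i => V i ω) = Fin.cons x g) := by
    simp [Prod.ext_iff, funext_iff, Fin.forall_fin_succ]
  by_cases hc : (fun i => V i ω) = Fin.cons x g
  · rw [if_pos (hiff.2 hc), if_pos hc]
  · rw [if_neg (fun hh => hc (hiff.1 hh)), if_neg hc]

lemma indepFam_tail {m : ℕ} {S : Type*} {μ : FinProb Ω} {V : Fin (m+1) → Ω → S}
    (h : IndepFam μ (fun i => V i)) : IndepFam μ (fun i : Fin m => V i.succ) := by
  intro g
  have h1 : prob μ (fun ω (i : Fin m) => V i.succ ω) g
      = ∑ x ∈ Finset.univ.image (V 0),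
          prob μ (fun ω => (V 0 ω, fun i : Fin m => V i.succ ω)) (x, g) :=
    prob_snd μ (V 0) (fun ω (i : Fin m) => V i.succ ω) (fun ω => mem_image_self (V 0) ω) g
  have h2 : ∀ x ∈ Finset.univ.image (V 0),
      prob μ (fun ω => (V 0 ω, fun i : Fin m => V i.succ ω)) (x, g)
        = prob μ (V 0) x * ∏ i : Fin m, prob μ (V i.succ) (g i) := by
    intro x _
    rw [tuple_cons_prob μ V x g, h (Fin.cons x g), Fin.prod_univ_succ, Fin.cons_zero]
    simp [Fin.cons_succ]
  rw [h1, Finset.sum_congr rfl h2, ← Finset.sum_mul,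
    sum_prob μ (V 0) (fun ω => mem_image_self (V 0) ω), one_mul]

lemma indep_head_tail {m : ℕ} {S : Type*} {μ : FinProb Ω} {V : Fin (m+1) → Ω → S}
    (h : IndepFam μ (fun i => V i)) :
    IndepRV μ (V 0) (fun ω (i : Fin m) => V i.succ ω) := by
  intro x g
  rw [tuple_cons_prob μ V x g, h (Fin.cons x g), Fin.prod_univ_succ, Fin.cons_zero,
    indepFam_tail h g]
  simp [Fin.cons_succ]

end Chunk4
section Chunk5
variable {Ω S T U : Type*} [Fintype Ω]

lemma prob_marg_AC (μ : FinProb Ω) (α : Ω → S) (β : Ω → T) (γ : Ω → U)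
    {G' : Finset T} (hG : ∀ ω, β ω ∈ G') (s : S) (u : U) :
    prob μ (fun ω => (α ω, γ ω)) (s, u)
      = ∑ t ∈ G', prob μ (fun ω => (α ω, β ω, γ ω)) (s, t, u) := by
  unfold prob
  rw [Finset.sum_comm]
  refine Finset.sum_congr rfl fun ω _ => ?_
  simp only [Prod.mk.injEq]
  by_cases h1 : α ω = s
  · by_cases h2 : γ ω = u
    · simp only [h1, h2, true_and, and_true]
      rw [if_pos trivial, Finset.sum_ite_eq, if_pos (hG ω)]
    · simp [h1, h2]
  · simp [h1]

lemma prob_marg_BC (μ : FinProb Ω) (α : Ω → S) (β : Ω → T) (γ : Ω → U)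
    {F : Finset S} (hF : ∀ ω, α ω ∈ F) (t : T) (u : U) :
    prob μ (fun ω => (β ω, γ ω)) (t, u)
      = ∑ s ∈ F, prob μ (fun ω => (α ω, β ω, γ ω)) (s, t, u) := by
  unfold prob
  rw [Finset.sum_comm]
  refine Finset.sum_congr rfl fun ω _ => ?_
  simp only [Prod.mk.injEq]
  by_cases h1 : β ω = t
  · by_cases h2 : γ ω = u
    · simp only [h1, h2, true_and, and_true]
      rw [if_pos trivial, Finset.sum_ite_eq, if_pos (hF ω)]
    · simp [h1, h2]
  · simp [h1]

lemma prob_marg_C (μ : FinProb Ω) (α : Ω → S) (β : Ω → T) (γ : Ω → U)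
    {F : Finset S} {G' : Finset T} (hF : ∀ ω, α ω ∈ F) (hG : ∀ ω, β ω ∈ G') (u : U) :
    prob μ γ u = ∑ s ∈ F, ∑ t ∈ G', prob μ (fun ω => (α ω, β ω, γ ω)) (s, t, u) := by
  unfold prob
  simp only [Prod.mk.injEq]
  have key : ∀ ω, (if γ ω = u then μ.p ω else 0)
      = ∑ s ∈ F, ∑ t ∈ G', if α ω = s ∧ β ω = t ∧ γ ω = u then μ.p ω else 0 := by
    intro ω
    by_cases hγ : γ ω = u
    · simp only [hγ, and_true]
      have inner : ∀ s ∈ F, (∑ t ∈ G', if α ω = s ∧ β ω = t then μ.p ω else 0)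
          = if α ω = s then μ.p ω else 0 := by
        intro s _
        by_cases ha : α ω = s
        · simp only [ha, true_and]
          rw [Finset.sum_ite_eq, if_pos (hG ω)]
          simp
        · simp [ha]
      rw [if_pos trivial, Finset.sum_congr rfl inner, Finset.sum_ite_eq, if_pos (hF ω)]
    · simp [hγ]
  calc ∑ ω, (if γ ω = u then μ.p ω else 0)
      = ∑ ω, ∑ s ∈ F, ∑ t ∈ G', (if α ω = s ∧ β ω = t ∧ γ ω = u then μ.p ω else 0) :=
        Finset.sum_congr rfl (fun ω _ => key ω)
    _ = ∑ s ∈ F, ∑ ω, ∑ t ∈ G', (if α ω = s ∧ β ω = t ∧ γ ω = u then μ.p ω else 0) :=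
        Finset.sum_comm
    _ = _ := Finset.sum_congr rfl fun s _ => Finset.sum_comm

lemma entropy_submodular (μ : FinProb Ω) (α : Ω → S) (β : Ω → T) (γ : Ω → U) :
    entropy μ (fun ω => (α ω, β ω, γ ω)) + entropy μ γ
      ≤ entropy μ (fun ω => (α ω, γ ω)) + entropy μ (fun ω => (β ω, γ ω)) := by
  set F := Finset.univ.image α with hFdef
  set G' := Finset.univ.image β with hGdef
  set U' := Finset.univ.image γ with hUdef
  have hFm : ∀ ω, α ω ∈ F := fun ω => mem_image_self α ω
  have hGm : ∀ ω, β ω ∈ G' := fun ω => mem_image_self β ω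
  have hUm : ∀ ω, γ ω ∈ U' := fun ω => mem_image_self γ ω
  set P3 : S × T × U → ℝ := prob μ (fun ω => (α ω, β ω, γ ω)) with hP3
  set pac : S → U → ℝ := fun s u => prob μ (fun ω => (α ω, γ ω)) (s, u) with hpac
  set pbc : T → U → ℝ := fun t u => prob μ (fun ω => (β ω, γ ω)) (t, u) with hpbc
  set pc : U → ℝ := fun u => prob μ γ u with hpc
  have mAC : ∀ s u, pac s u = ∑ t ∈ G', P3 (s, t, u) := fun s u =>
    prob_marg_AC μ α β γ hGm s u
  have mBC : ∀ t u, pbc t u = ∑ s ∈ F, P3 (s, t, u) := fun t u =>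
    prob_marg_BC μ α β γ hFm t u
  have mC : ∀ u, pc u = ∑ s ∈ F, ∑ t ∈ G', P3 (s, t, u) := fun u =>
    prob_marg_C μ α β γ hFm hGm u
  have hKmem : ∀ ω, (α ω, β ω, γ ω) ∈ F ×ˢ G' ×ˢ U' := fun ω =>
    Finset.mem_product.2 ⟨hFm ω, Finset.mem_product.2 ⟨hGm ω, hUm ω⟩⟩
  have hP3nn : ∀ x, 0 ≤ P3 x := fun x => prob_nonneg μ _ x
  -- positivity of marginals on the support
  have hposs : ∀ s t u, s ∈ F → t ∈ G' → u ∈ U' → P3 (s, t, u) ≠ 0 →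
      0 < pac s u ∧ 0 < pbc t u ∧ 0 < pc u := by
    intro s t u hs ht hu hne
    have hpos : 0 < P3 (s, t, u) := (hP3nn _).lt_of_ne (Ne.symm hne)
    refine ⟨?_, ?_, ?_⟩
    · rw [mAC]
      exact lt_of_lt_of_le hpos
        (Finset.single_le_sum (f := fun t' => P3 (s, t', u)) (fun t' _ => hP3nn _) ht)
    · rw [mBC]
      exact lt_of_lt_of_le hpos
        (Finset.single_le_sum (f := fun s' => P3 (s', t, u)) (fun s' _ => hP3nn _) hs)
    · rw [mC]
      calc (0:ℝ) < P3 (s, t, u) := hpos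
        _ ≤ ∑ t' ∈ G', P3 (s, t', u) :=
          Finset.single_le_sum (f := fun t' => P3 (s, t', u)) (fun t' _ => hP3nn _) ht
        _ ≤ ∑ s' ∈ F, ∑ t' ∈ G', P3 (s', t', u) :=
          Finset.single_le_sum (f := fun s' => ∑ t' ∈ G', P3 (s', t', u))
            (fun s' _ => Finset.sum_nonneg fun t' _ => hP3nn _) hs
  -- sums of marginals
  have sAC : ∀ u, ∑ s ∈ F, pac s u = pc u := by
    intro u
    rw [mC]
    exact Finset.sum_congr rfl fun s _ => mAC s u
  have sBC : ∀ u, ∑ t ∈ G', pbc t u = pc u := by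
    intro u
    rw [mC, Finset.sum_comm]
    exact Finset.sum_congr rfl fun t _ => mBC t u
  -- Gibbs
  have hb1 : ∑ x ∈ F ×ˢ G' ×ˢ U',
      pac x.1 x.2.2 * pbc x.2.1 x.2.2 / pc x.2.2 ≤ 1 := by
    rw [Finset.sum_product]
    dsimp only
    have e1 : ∀ s ∈ F, ∑ x ∈ G' ×ˢ U', pac s x.2 * pbc x.1 x.2 / pc x.2
        = ∑ u ∈ U', ∑ t ∈ G', pac s u * pbc t u / pc u := by
      intro s _
      rw [Finset.sum_product_right]
    rw [Finset.sum_congr rfl e1, Finset.sum_comm]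
    have e2 : ∀ u ∈ U', ∑ s ∈ F, ∑ t ∈ G', pac s u * pbc t u / pc u ≤ pc u := by
      intro u _
      have : ∀ s ∈ F, ∑ t ∈ G', pac s u * pbc t u / pc u
          = pac s u * (pc u / pc u) := by
        intro s _
        rw [← Finset.sum_div, ← Finset.mul_sum, sBC, mul_div_assoc]
      rw [Finset.sum_congr rfl this, ← Finset.sum_mul, sAC]
      by_cases hz : pc u = 0
      · simp [hz]
      · rw [div_self hz, mul_one]
    calc ∑ u ∈ U', ∑ s ∈ F, ∑ t ∈ G', pac s u * pbc t u / pc u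
        ≤ ∑ u ∈ U', pc u := Finset.sum_le_sum e2
      _ = 1 := sum_prob μ γ hUm
  have hgibbs := gibbs (F ×ˢ G' ×ˢ U') P3
      (fun x => pac x.1 x.2.2 * pbc x.2.1 x.2.2 / pc x.2.2)
      (fun x _ => hP3nn x)
      (fun x _ => div_nonneg (mul_nonneg (prob_nonneg μ _ _) (prob_nonneg μ _ _))
        (prob_nonneg μ _ _))
      (by
        rintro ⟨s, t, u⟩ hx hne
        obtain ⟨hs, htu⟩ := Finset.mem_product.1 hx
        obtain ⟨ht, hu⟩ := Finset.mem_product.1 htu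
        obtain ⟨h1, h2, h3⟩ := hposs s t u hs ht hu hne
        exact div_ne_zero (mul_ne_zero h1.ne' h2.ne') h3.ne')
      (sum_prob μ _ hKmem) hb1
  -- split the cross-entropy
  have hsplit : ∀ x ∈ F ×ˢ G' ×ˢ U',
      -(P3 x * Real.log (pac x.1 x.2.2 * pbc x.2.1 x.2.2 / pc x.2.2))
        = -(P3 x * Real.log (pac x.1 x.2.2)) + -(P3 x * Real.log (pbc x.2.1 x.2.2))
          + P3 x * Real.log (pc x.2.2) := by
    rintro ⟨s, t, u⟩ hx
    obtain ⟨hs, htu⟩ := Finset.mem_product.1 hx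
    obtain ⟨ht, hu⟩ := Finset.mem_product.1 htu
    by_cases hne : P3 (s, t, u) = 0
    · simp [hne]
    · obtain ⟨h1, h2, h3⟩ := hposs s t u hs ht hu hne
      rw [Real.log_div (mul_ne_zero h1.ne' h2.ne') h3.ne',
        Real.log_mul h1.ne' h2.ne']
      ring
  -- the three sums
  have S1 : ∑ x ∈ F ×ˢ G' ×ˢ U', -(P3 x * Real.log (pac x.1 x.2.2))
      = entropy μ (fun ω => (α ω, γ ω)) := by
    rw [entropy_eq_sum μ (fun ω => (α ω, γ ω))
        (F := F ×ˢ U') (fun ω => Finset.mem_product.2 ⟨hFm ω, hUm ω⟩),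
      Finset.sum_product (f := fun x => -(P3 x * Real.log (pac x.1 x.2.2))),
      Finset.sum_product]
    refine Finset.sum_congr rfl fun s _ => ?_
    dsimp only
    rw [Finset.sum_product_right]
    refine Finset.sum_congr rfl fun u _ => ?_
    dsimp only
    rw [Finset.sum_neg_distrib, ← Finset.sum_mul, ← mAC]
    simp [Real.negMulLog]
    rfl
  have S2 : ∑ x ∈ F ×ˢ G' ×ˢ U', -(P3 x * Real.log (pbc x.2.1 x.2.2))
      = entropy μ (fun ω => (β ω, γ ω)) := by
    rw [entropy_eq_sum μ (fun ω => (β ω, γ ω))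
        (F := G' ×ˢ U') (fun ω => Finset.mem_product.2 ⟨hGm ω, hUm ω⟩),
      Finset.sum_product_right (f := fun x => -(P3 x * Real.log (pbc x.2.1 x.2.2)))]
    refine Finset.sum_congr rfl ?_
    rintro ⟨t, u⟩ -
    dsimp only
    rw [Finset.sum_neg_distrib, ← Finset.sum_mul, ← mBC]
    simp [Real.negMulLog]
    rfl
  have S3 : ∑ x ∈ F ×ˢ G' ×ˢ U', P3 x * Real.log (pc x.2.2) = - entropy μ γ := by
    rw [entropy_eq_sum μ γ (F := U') hUm,
      Finset.sum_product_right (f := fun x => P3 x * Real.log (pc x.2.2)),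
      Finset.sum_product_right]
    rw [← Finset.sum_neg_distrib]
    refine Finset.sum_congr rfl fun u _ => ?_
    dsimp only
    have e1 : ∀ t ∈ G', ∑ s ∈ F, P3 (s, t, u) * Real.log (pc u)
        = (∑ s ∈ F, P3 (s, t, u)) * Real.log (pc u) := by
      intro t _
      rw [Finset.sum_mul]
    rw [Finset.sum_congr rfl e1, ← Finset.sum_mul, Finset.sum_comm, ← mC]
    simp [Real.negMulLog]
    rfl
  have hE3 : entropy μ (fun ω => (α ω, β ω, γ ω))
      = ∑ x ∈ F ×ˢ G' ×ˢ U', Real.negMulLog (P3 x) :=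
    entropy_eq_sum μ _ hKmem
  rw [Finset.sum_congr rfl hsplit, Finset.sum_add_distrib, Finset.sum_add_distrib,
    S1, S2, S3] at hgibbs
  rw [hE3]
  linarith
end Chunk5
section Chunk6
variable {Ω G : Type*} [Fintype Ω] [AddCommGroup G]

lemma kv (μ : FinProb Ω) (A B C : Ω → G)
    (h1 : IndepRV μ (fun ω => (A ω, B ω)) C) (h2 : IndepRV μ A B) :
    entropy μ (fun ω => A ω + B ω + C ω) + entropy μ B
      ≤ entropy μ (fun ω => A ω + B ω) + entropy μ (fun ω => B ω + C ω) := by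
  have hABC : IndepRV μ A (fun ω => (B ω, C ω)) := indep_triple_pair h1 h2
  have hBC : IndepRV μ B C := indep_snd_of_pair h1
  have hA_BC : IndepRV μ A (fun ω => B ω + C ω) :=
    indep_comp₂ hABC id (fun p : G × G => p.1 + p.2)
  have hC_AB : IndepRV μ C (fun ω => A ω + B ω) :=
    indep_comp₂ h1.symm id (fun p : G × G => p.1 + p.2)
  have sub := entropy_submodular μ A C (fun ω => A ω + B ω + C ω)
  have e2 : entropy μ (fun ω => (A ω, C ω, A ω + B ω + C ω))
      = entropy μ A + (entropy μ B + entropy μ C) := by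
    have hinj : Function.Injective
        (fun p : G × G × G => (p.1, p.2.2, p.1 + p.2.1 + p.2.2)) := by
      rintro ⟨a, b, c⟩ ⟨a', b', c'⟩ h
      simp only [Prod.mk.injEq] at h ⊢
      obtain ⟨rfl, rfl, h3⟩ := h
      exact ⟨rfl, add_left_cancel (add_right_cancel h3), rfl⟩
    have hcomp := entropy_comp_of_injective μ (fun ω => (A ω, (B ω, C ω))) _ hinj
    dsimp only at hcomp
    rw [hcomp, entropy_pair_of_indep μ _ _ hABC, entropy_pair_of_indep μ _ _ hBC]
  have e3 : entropy μ (fun ω => (A ω, A ω + B ω + C ω))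
      = entropy μ A + entropy μ (fun ω => B ω + C ω) := by
    have hinj : Function.Injective (fun p : G × G => (p.1, p.1 + p.2)) := by
      rintro ⟨a, b⟩ ⟨a', b'⟩ h
      simp only [Prod.mk.injEq] at h ⊢
      obtain ⟨rfl, h2'⟩ := h
      exact ⟨rfl, add_left_cancel h2'⟩
    have hcomp := entropy_comp_of_injective μ (fun ω => (A ω, B ω + C ω)) _ hinj
    have hfun : (fun ω => (A ω, A ω + (B ω + C ω)))
        = fun ω => (A ω, A ω + B ω + C ω) := funext fun ω => by rw [add_assoc]
    rw [← hfun, hcomp, entropy_pair_of_indep μ _ _ hA_BC]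
  have e4 : entropy μ (fun ω => (C ω, A ω + B ω + C ω))
      = entropy μ C + entropy μ (fun ω => A ω + B ω) := by
    have hinj : Function.Injective (fun p : G × G => (p.1, p.2 + p.1)) := by
      rintro ⟨a, b⟩ ⟨a', b'⟩ h
      simp only [Prod.mk.injEq] at h ⊢
      obtain ⟨rfl, h2'⟩ := h
      exact ⟨rfl, add_right_cancel h2'⟩
    have hcomp := entropy_comp_of_injective μ (fun ω => (C ω, A ω + B ω)) _ hinj
    dsimp only at hcomp
    rw [hcomp, entropy_pair_of_indep μ _ _ hC_AB]
  linarith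

end Chunk6
section Chunk7
variable {G Ω₀ : Type*} [AddCommGroup G] [Fintype Ω₀]

lemma Rlem (μ₀ : FinProb Ω₀) (X Y : Ω₀ → G) (hXY : IndepRV μ₀ X Y) :
    ∀ (n : ℕ) {Ω : Type*} [Fintype Ω] (μ : FinProb Ω) (Xc Yc : Fin (n+1) → Ω → G),
      IndepFam μ (fun i ω => (Xc i ω, Yc i ω)) →
      (∀ i, IdentDist μ (fun ω => (Xc i ω, Yc i ω)) μ₀ (fun ω => (X ω, Y ω))) →
      entropy μ (fun ω => Yc 0 ω + ∑ i : Fin n, (Xc i.succ ω + Yc i.succ ω))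
        ≤ entropy μ₀ Y + n * (2 * entropy μ₀ (fun ω => X ω + Y ω)
            - entropy μ₀ X - entropy μ₀ Y) := by
  intro n
  induction n with
  | zero =>
    intro Ω _ μ Xc Yc hindep hcopy
    have h0 : (fun ω => Yc 0 ω + ∑ i : Fin 0, (Xc i.succ ω + Yc i.succ ω)) = Yc 0 :=
      funext fun ω => by simp
    have hE : entropy μ (Yc 0) = entropy μ₀ Y :=
      entropy_congr (identDist_comp (hcopy 0) Prod.snd)
    rw [h0, hE]
    simp
  | succ n IH =>
    intro Ω _ μ Xc Yc hindep hcopy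
    -- abbreviations
    set HS := entropy μ₀ (fun ω => X ω + Y ω) with hHS
    set HX := entropy μ₀ X with hHX
    set HY := entropy μ₀ Y with hHY
    -- deep sum
    set D : Ω → G := fun ω => ∑ i : Fin n, (Xc i.succ.succ ω + Yc i.succ.succ ω) with hD
    -- independence structure
    have f1 : IndepRV μ (fun ω => (Xc 0 ω, Yc 0 ω))
        (fun ω (i : Fin (n+1)) => (Xc i.succ ω, Yc i.succ ω)) :=
      indep_head_tail hindep
    have f2 : IndepFam μ (fun (i : Fin (n+1)) ω => (Xc i.succ ω, Yc i.succ ω)) :=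
      indepFam_tail hindep
    have f3 : IndepRV μ (fun ω => (Xc (0 : Fin (n+1)).succ ω, Yc (0 : Fin (n+1)).succ ω))
        (fun ω (i : Fin n) => (Xc i.succ.succ ω, Yc i.succ.succ ω)) :=
      indep_head_tail f2
    have J : IndepRV μ (fun ω => (Xc (0 : Fin (n+1)).succ ω, Yc (0 : Fin (n+1)).succ ω)) D :=
      indep_comp₂ f3 id (fun g : Fin n → G × G => ∑ i, ((g i).1 + (g i).2))
    have K : IndepRV μ (Xc (0 : Fin (n+1)).succ) (Yc (0 : Fin (n+1)).succ) :=
      indep_of_identdist (hcopy (0 : Fin (n+1)).succ) hXY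
    have L : IndepRV μ (Xc (0 : Fin (n+1)).succ)
        (fun ω => (Yc (0 : Fin (n+1)).succ ω, D ω)) := indep_triple_pair J K
    have N : IndepRV μ (Xc (0 : Fin (n+1)).succ)
        (fun ω => Yc (0 : Fin (n+1)).succ ω + D ω) :=
      indep_comp₂ L id (fun p : G × G => p.1 + p.2)
    have M : IndepRV μ (Yc 0)
        (fun ω => (Xc (0 : Fin (n+1)).succ ω, Yc (0 : Fin (n+1)).succ ω + D ω)) :=
      indep_comp₂ f1 Prod.snd
        (fun g : Fin (n+1) → G × G =>
          ((g 0).1, (g 0).2 + ∑ i : Fin n, ((g i.succ).1 + (g i.succ).2)))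
    have hA1B1 : IndepRV μ (Yc 0) (Xc (0 : Fin (n+1)).succ) :=
      indep_comp₂ M id Prod.fst
    have hpairC : IndepRV μ (fun ω => (Yc 0 ω, Xc (0 : Fin (n+1)).succ ω))
        (fun ω => Yc (0 : Fin (n+1)).succ ω + D ω) := indep_pair_left M N
    -- KV applications
    have kv1 := kv μ (Yc 0) (Xc (0 : Fin (n+1)).succ)
      (fun ω => Yc (0 : Fin (n+1)).succ ω + D ω) hpairC hA1B1
    have kv2 := kv μ (Xc (0 : Fin (n+1)).succ) (Yc (0 : Fin (n+1)).succ) D J K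
    -- distribution identities
    have hYX : entropy μ (fun ω => Yc 0 ω + Xc (0 : Fin (n+1)).succ ω) = HS := by
      have h1 : IdentDist μ (fun ω => Yc 0 ω + Xc (0 : Fin (n+1)).succ ω)
          μ₀ (fun ω => Y ω + X ω) :=
        identdist_add_of_indep hA1B1 hXY.symm
          (identDist_comp (hcopy 0) Prod.snd)
          (identDist_comp (hcopy (0 : Fin (n+1)).succ) Prod.fst)
      have h2 : (fun ω => Y ω + X ω) = fun ω => X ω + Y ω :=
        funext fun ω => add_comm _ _
      rw [entropy_congr h1, h2]
    have hX1 : entropy μ (Xc (0 : Fin (n+1)).succ) = HX :=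
      entropy_congr (identDist_comp (hcopy (0 : Fin (n+1)).succ) Prod.fst)
    have hY1 : entropy μ (Yc (0 : Fin (n+1)).succ) = HY :=
      entropy_congr (identDist_comp (hcopy (0 : Fin (n+1)).succ) Prod.snd)
    have hS1 : entropy μ (fun ω => Xc (0 : Fin (n+1)).succ ω + Yc (0 : Fin (n+1)).succ ω)
        = HS :=
      entropy_congr (identDist_comp (hcopy (0 : Fin (n+1)).succ) (fun p => p.1 + p.2))
    -- recursive bound
    have hIH := IH μ (fun i => Xc i.succ) (fun i => Yc i.succ) f2 (fun i => hcopy i.succ)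
    -- function rewrites
    have hfun : (fun ω => Yc 0 ω + ∑ i : Fin (n+1), (Xc i.succ ω + Yc i.succ ω))
        = fun ω => Yc 0 ω + Xc (0 : Fin (n+1)).succ ω
            + (Yc (0 : Fin (n+1)).succ ω + D ω) := by
      funext ω
      rw [Fin.sum_univ_succ]
      simp only [hD]
      abel
    have hassoc : (fun ω => Xc (0 : Fin (n+1)).succ ω
          + (Yc (0 : Fin (n+1)).succ ω + D ω))
        = fun ω => Xc (0 : Fin (n+1)).succ ω + Yc (0 : Fin (n+1)).succ ω + D ω :=
      funext fun ω => (add_assoc _ _ _).symm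
    rw [hfun]
    rw [hassoc] at kv1
    rw [hYX, hX1] at kv1
    rw [hS1, hY1] at kv2
    push_cast
    linarith

theorem entropy_iterated_sum_le' {Ω : Type*} [Fintype Ω]
    (μ₀ : FinProb Ω₀) (X Y : Ω₀ → G) (hXY : IndepRV μ₀ X Y)
    (n : ℕ) (μ : FinProb Ω) (Xc Yc : Fin (n + 1) → Ω → G)
    (hindep : IndepFam μ (fun i ω => (Xc i ω, Yc i ω)))
    (hcopy : ∀ i, IdentDist μ (fun ω => (Xc i ω, Yc i ω)) μ₀ (fun ω => (X ω, Y ω))) :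
    entropy μ (fun ω => ∑ i, (Xc i ω + Yc i ω)) ≤
      (2 * (n : ℝ) + 1) * entropy μ₀ (fun ω => X ω + Y ω)
        - (n : ℝ) * entropy μ₀ X - (n : ℝ) * entropy μ₀ Y := by
  set HS := entropy μ₀ (fun ω => X ω + Y ω) with hHS
  set HX := entropy μ₀ X with hHX
  set HY := entropy μ₀ Y with hHY
  set D : Ω → G := fun ω => ∑ i : Fin n, (Xc i.succ ω + Yc i.succ ω) with hD
  have f1 : IndepRV μ (fun ω => (Xc 0 ω, Yc 0 ω))
      (fun ω (i : Fin n) => (Xc i.succ ω, Yc i.succ ω)) :=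
    indep_head_tail hindep
  have h1 : IndepRV μ (fun ω => (Xc 0 ω, Yc 0 ω)) D :=
    indep_comp₂ f1 id (fun g : Fin n → G × G => ∑ i, ((g i).1 + (g i).2))
  have h2 : IndepRV μ (Xc 0) (Yc 0) := indep_of_identdist (hcopy 0) hXY
  have kv1 := kv μ (Xc 0) (Yc 0) D h1 h2
  have hS0 : entropy μ (fun ω => Xc 0 ω + Yc 0 ω) = HS :=
    entropy_congr (identDist_comp (hcopy 0) (fun p => p.1 + p.2))
  have hY0 : entropy μ (Yc 0) = HY :=
    entropy_congr (identDist_comp (hcopy 0) Prod.snd)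
  have hR := Rlem μ₀ X Y hXY n μ Xc Yc hindep hcopy
  have hfun : (fun ω => ∑ i : Fin (n+1), (Xc i ω + Yc i ω))
      = fun ω => Xc 0 ω + Yc 0 ω + D ω := by
    funext ω
    rw [Fin.sum_univ_succ]
  rw [hfun]
  rw [hS0, hY0] at kv1
  linarith

end Chunk7

/-- if `(X_i, Y_i)`, `i = 0, …, n`, are jointly independent copies of a
pair `(X, Y)` of independent random variables, and `S_i = X_i + Y_i`, then
`H(S_0 + … + S_n) ≤ (2n+1)·H(X+Y) − n·H(X) − n·H(Y)`. -/
theorem entropy_iterated_sum_le {G Ω₀ Ω : Type*} [AddCommGroup G] [Fintype Ω₀] [Fintype Ω]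
    (μ₀ : FinProb Ω₀) (X Y : Ω₀ → G) (hXY : IndepRV μ₀ X Y)
    (n : ℕ) (μ : FinProb Ω) (Xc Yc : Fin (n + 1) → Ω → G)
    (hindep : IndepFam μ (fun i ω => (Xc i ω, Yc i ω)))
    (hcopy : ∀ i, IdentDist μ (fun ω => (Xc i ω, Yc i ω)) μ₀ (fun ω => (X ω, Y ω))) :
    entropy μ (fun ω => ∑ i, (Xc i ω + Yc i ω)) ≤
      (2 * (n : ℝ) + 1) * entropy μ₀ (fun ω => X ω + Y ω)
        - (n : ℝ) * entropy μ₀ X - (n : ℝ) * entropy μ₀ Y :=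
  entropy_iterated_sum_le' μ₀ X Y hXY n μ Xc Yc hindep hcopy
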